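/- Let (L, [·,…,·], ε, α, β) be a multiplicative n-BiHom-Lie color algebra. If D is an (αᵏ,βʳ)-derivation of degree d and φ an element of the (αˡ,βˢ)-centroid of degree f, then the ε-commutator [D,φ] = Dφ − ε(d,f)φD lies in the (α^{k+l},β^{r+s})-centroid of L. -/

import Mathlib

open Finset TensorProduct

/-- An `n`-BiHom-Lie color algebra (with `n = arity = N+1`, so the structure parameter `N`
equals `n-1`): a `Γ`-graded `K`-vector space `L` with an even `(N+1)`-linear bracket,
a skew-symmetric bicharacter `ε`, and two even commuting linear maps `α, β` satisfying the
`ε`-BiHom-skew-symmetry and the BiHom `ε`-Jacobi identity. -/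
structure NBLCA (K : Type*) [Field K] (Γ : Type*) [AddCommGroup Γ] [DecidableEq Γ] (N : ℕ)
    (L : Type*) [AddCommGroup L] [Module K L] : Type _ where
  grading : Γ → Submodule K L
  internal : DirectSum.IsInternal grading
  ε : Γ → Γ → K
  α : L →ₗ[K] L
  β : L →ₗ[K] L
  bracket : MultilinearMap K (fun _ : Fin (N + 1) => L) L
  eps_ne : ∀ a b, ε a b ≠ 0
  eps_skew : ∀ a b, ε a b * ε b a = 1
  eps_add_right : ∀ a b c, ε a (b + c) = ε a b * ε a c
  eps_add_left : ∀ a b c, ε (a + b) c = ε a c * ε b c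
  α_even : ∀ (γ : Γ) (x : L), x ∈ grading γ → α x ∈ grading γ
  β_even : ∀ (γ : Γ) (x : L), x ∈ grading γ → β x ∈ grading γ
  αβ_comm : ∀ x, α (β x) = β (α x)
  bracket_grade : ∀ (d : Fin (N + 1) → Γ) (x : Fin (N + 1) → L),
    (∀ i, x i ∈ grading (d i)) → bracket x ∈ grading (∑ i, d i)
  skew : ∀ (d : Fin (N + 1) → Γ) (x : Fin (N + 1) → L), (∀ i, x i ∈ grading (d i)) →
    ∀ k : Fin N,
      bracket (Fin.snoc (fun i : Fin N => β ((x ∘ Equiv.swap k.castSucc k.succ) i.castSucc))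
          (α ((x ∘ Equiv.swap k.castSucc k.succ) (Fin.last N))))
        = (-(ε (d k.castSucc) (d k.succ))) •
          bracket (Fin.snoc (fun i : Fin N => β (x i.castSucc)) (α (x (Fin.last N))))
  jacobi : ∀ (dx : Fin N → Γ) (x : Fin N → L) (dy : Fin (N + 1) → Γ) (y : Fin (N + 1) → L),
    (∀ i, x i ∈ grading (dx i)) → (∀ i, y i ∈ grading (dy i)) →
    bracket (Fin.snoc (fun i : Fin N => β (β (x i)))
        (bracket (Fin.snoc (fun i : Fin N => β (y i.castSucc)) (α (y (Fin.last N))))))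
      = ∑ k : Fin (N + 1), ε (∑ i, dx i) (∑ l ∈ Finset.Iio k, dy l) •
          bracket (Function.update (fun i => β (β (y i))) k
            (bracket (Fin.snoc (fun i : Fin N => β (x i)) (α (y k)))))

namespace NBLCA

variable {K : Type*} [Field K] {Γ : Type*} [AddCommGroup Γ] [DecidableEq Γ] {N : ℕ}
  {L : Type*} [AddCommGroup L] [Module K L]

/-- `α` and `β` are morphisms for the bracket. -/
def IsMultiplicative (A : NBLCA K Γ N L) : Prop :=
  (∀ x, A.α (A.bracket x) = A.bracket fun i => A.α (x i)) ∧
  (∀ x, A.β (A.bracket x) = A.bracket fun i => A.β (x i))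

/-- A linear map homogeneous of degree `d`. -/
def HasDegree (A : NBLCA K Γ N L) (d : Γ) (D : L →ₗ[K] L) : Prop :=
  ∀ (γ : Γ) (x : L), x ∈ A.grading γ → D x ∈ A.grading (γ + d)

/-- A linear map commuting with the twisting maps `α` and `β`. -/
def CommutesTw (A : NBLCA K Γ N L) (D : L →ₗ[K] L) : Prop :=
  (∀ x, D (A.α x) = A.α (D x)) ∧ (∀ x, D (A.β x) = A.β (D x))

/-- The twisting map `βʳ ∘ αᵏ`. -/
def tw (A : NBLCA K Γ N L) (k r : ℕ) : L →ₗ[K] L := (A.β ^ r) ∘ₗ (A.α ^ k)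

/-- `(αᵏ, βʳ)`-derivation of degree `d`. -/
def IsDer (A : NBLCA K Γ N L) (k r : ℕ) (d : Γ) (D : L →ₗ[K] L) : Prop :=
  A.HasDegree d D ∧ A.CommutesTw D ∧
  ∀ (dx : Fin (N + 1) → Γ) (x : Fin (N + 1) → L), (∀ i, x i ∈ A.grading (dx i)) →
    D (A.bracket x) = ∑ i : Fin (N + 1), A.ε d (∑ l ∈ Finset.Iio i, dx l) •
      A.bracket (Function.update (fun j => A.tw k r (x j)) i (D (x i)))

/-- `(αᵏ, βʳ)`-centroid elements of degree `d`. -/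
def IsCent (A : NBLCA K Γ N L) (k r : ℕ) (d : Γ) (D : L →ₗ[K] L) : Prop :=
  A.HasDegree d D ∧ A.CommutesTw D ∧
  ∀ (i : Fin (N + 1)) (dx : Fin (N + 1) → Γ) (x : Fin (N + 1) → L),
    (∀ j, x j ∈ A.grading (dx j)) →
    D (A.bracket x) = A.ε d (∑ l ∈ Finset.Iio i, dx l) •
      A.bracket (Function.update (fun j => A.tw k r (x j)) i (D (x i)))

/-- `(αᵏ, βʳ)`-quasicentroid elements of degree `d`. -/
def IsQC (A : NBLCA K Γ N L) (k r : ℕ) (d : Γ) (D : L →ₗ[K] L) : Prop :=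
  A.HasDegree d D ∧ A.CommutesTw D ∧
  ∀ (i : Fin (N + 1)) (dx : Fin (N + 1) → Γ) (x : Fin (N + 1) → L),
    (∀ j, x j ∈ A.grading (dx j)) →
    A.bracket (Function.update (fun j => A.tw k r (x j)) 0 (D (x 0)))
      = A.ε d (∑ l ∈ Finset.Iio i, dx l) •
        A.bracket (Function.update (fun j => A.tw k r (x j)) i (D (x i)))

/-- Central `(αᵏ, βʳ)`-derivation of degree `d`. -/
def IsZDer (A : NBLCA K Γ N L) (k r : ℕ) (d : Γ) (D : L →ₗ[K] L) : Prop :=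
  A.HasDegree d D ∧ A.CommutesTw D ∧
  ∀ (dx : Fin (N + 1) → Γ) (x : Fin (N + 1) → L), (∀ i, x i ∈ A.grading (dx i)) →
    D (A.bracket x) = 0 ∧
    ∀ i : Fin (N + 1), A.ε d (∑ l ∈ Finset.Iio i, dx l) •
      A.bracket (Function.update (fun j => A.tw k r (x j)) i (D (x i))) = 0

/-- BiHom-ideal of an `n`-BiHom-Lie color algebra. -/
def IsBiHomIdeal (A : NBLCA K Γ N L) (I : Submodule K L) : Prop :=
  (∀ x ∈ I, A.α x ∈ I) ∧ (∀ x ∈ I, A.β x ∈ I) ∧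
  ∀ x : Fin (N + 1) → L, x 0 ∈ I → A.bracket x ∈ I

/-- The derived sequence `L₀ = L`, `Lₘ₊₁ = [Lₘ, …, Lₘ]`. -/
def derived (A : NBLCA K Γ N L) : ℕ → Submodule K L
  | 0 => ⊤
  | m + 1 => Submodule.span K
      {z | ∃ x : Fin (N + 1) → L, (∀ i, x i ∈ A.derived m) ∧ z = A.bracket x}

end NBLCA

section Aux

variable {K : Type*} [Field K] {Γ : Type*} [AddCommGroup Γ] [DecidableEq Γ] {N : ℕ}
  {L : Type*} [AddCommGroup L] [Module K L] (A : NBLCA K Γ N L)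

lemma NBLCA.alpha_pow_beta (a : ℕ) (x : L) : (A.α ^ a) (A.β x) = A.β ((A.α ^ a) x) := by
  induction a with
  | zero => simp
  | succ n ih =>
      rw [pow_succ', Module.End.mul_apply, Module.End.mul_apply, ih, A.αβ_comm]

lemma NBLCA.alpha_pow_beta_pow (a b : ℕ) (x : L) :
    (A.α ^ a) ((A.β ^ b) x) = (A.β ^ b) ((A.α ^ a) x) := by
  induction b with
  | zero => simp
  | succ n ih =>
      rw [pow_succ', Module.End.mul_apply, Module.End.mul_apply, A.alpha_pow_beta, ih]

lemma NBLCA.tw_tw (a b c e : ℕ) (x : L) :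
    A.tw a b (A.tw c e x) = A.tw (a + c) (b + e) x := by
  simp only [NBLCA.tw, LinearMap.comp_apply]
  rw [A.alpha_pow_beta_pow, pow_add, pow_add, Module.End.mul_apply, Module.End.mul_apply]

lemma NBLCA.pow_even {g : L →ₗ[K] L} (hg : ∀ (γ : Γ) (x : L), x ∈ A.grading γ → g x ∈ A.grading γ)
    (n : ℕ) (γ : Γ) (x : L) (hx : x ∈ A.grading γ) : (g ^ n) x ∈ A.grading γ := by
  induction n with
  | zero => simpa
  | succ m ih => rw [pow_succ', Module.End.mul_apply]; exact hg γ _ ih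

lemma NBLCA.tw_grade (a b : ℕ) (γ : Γ) (x : L) (hx : x ∈ A.grading γ) :
    A.tw a b x ∈ A.grading γ :=
  A.pow_even A.β_even b γ _ (A.pow_even A.α_even a γ x hx)

lemma commutesTw_pow {D g : L →ₗ[K] L} (hg : ∀ x, D (g x) = g (D x)) (n : ℕ) (x : L) :
    D ((g ^ n) x) = (g ^ n) (D x) := by
  induction n with
  | zero => simp
  | succ m ih => rw [pow_succ', Module.End.mul_apply, hg, ih, Module.End.mul_apply]

lemma NBLCA.commutesTw_tw {D : L →ₗ[K] L} (hD : A.CommutesTw D) (a b : ℕ) (x : L) :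
    D (A.tw a b x) = A.tw a b (D x) := by
  simp only [NBLCA.tw, LinearMap.comp_apply]
  rw [commutesTw_pow hD.2, commutesTw_pow hD.1]

lemma NBLCA.eps_zero (a : Γ) : A.ε a 0 = 1 := by
  have h := A.eps_add_right a 0 0
  rw [add_zero] at h
  exact (mul_left_cancel₀ (A.eps_ne a 0) (by rw [← h, mul_one])).symm

lemma sum_update_add (g : Fin (N + 1) → Γ) (i : Fin (N + 1)) (a : Γ) (T : Finset (Fin (N + 1))) :
    ∑ m ∈ T, Function.update g i (g i + a) m
      = (∑ m ∈ T, g m) + (if i ∈ T then a else 0) := by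
  by_cases h : i ∈ T
  · rw [Finset.sum_update_of_mem h, ← Finset.add_sum_erase _ g h, if_pos h, Finset.erase_eq]
    abel
  · rw [Finset.sum_update_of_notMem h, if_neg h, add_zero]

end Aux
/-- The `ε`-commutator of an `(αᵏ,βʳ)`-derivation of degree `d` and an element of the
`(αˡ,βˢ)`-centroid of degree `f` lies in the `(α^{k+l},β^{r+s})`-centroid. -/
theorem commutator_Der_C_isCent {K : Type*} [Field K] {Γ : Type*} [AddCommGroup Γ]
    [DecidableEq Γ] {N : ℕ} {L : Type*} [AddCommGroup L] [Module K L]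
    (A : NBLCA K Γ N L) (hmul : A.IsMultiplicative)
    (k r l s : ℕ) (d f : Γ) (D φ : L →ₗ[K] L)
    (hD : A.IsDer k r d D) (hφ : A.IsCent l s f φ) :
    A.IsCent (k + l) (r + s) (d + f) (D ∘ₗ φ - A.ε d f • (φ ∘ₗ D)) := by
  obtain ⟨hDdeg, hDtw, hDbr⟩ := hD
  obtain ⟨hφdeg, hφtw, hφbr⟩ := hφ
  refine ⟨?_, ⟨?_, ?_⟩, ?_⟩
  · intro γ v hv
    simp only [LinearMap.sub_apply, LinearMap.comp_apply, LinearMap.smul_apply]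
    refine Submodule.sub_mem _ ?_ (Submodule.smul_mem _ _ ?_)
    · have h := hDdeg _ _ (hφdeg γ v hv)
      rwa [show γ + f + d = γ + (d + f) by abel] at h
    · have h := hφdeg _ _ (hDdeg γ v hv)
      rwa [show γ + d + f = γ + (d + f) by abel] at h
  · intro v
    simp only [LinearMap.sub_apply, LinearMap.comp_apply, LinearMap.smul_apply, map_sub,
      map_smul, hDtw.1, hφtw.1]
  · intro v
    simp only [LinearMap.sub_apply, LinearMap.comp_apply, LinearMap.smul_apply, map_sub,
      map_smul, hDtw.2, hφtw.2]
  · intro i dx x hx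
    set y : Fin (N + 1) → L := Function.update (fun j => A.tw l s (x j)) i (φ (x i)) with hy
    set dy : Fin (N + 1) → Γ := Function.update dx i (dx i + f) with hdy
    have hyg : ∀ j, y j ∈ A.grading (dy j) := by
      intro j
      rcases eq_or_ne j i with h | h
      · subst h
        simpa [hy, hdy] using hφdeg _ _ (hx j)
      · simpa [hy, hdy, Function.update_of_ne h] using A.tw_grade l s _ _ (hx j)
    set z : Fin (N + 1) → Fin (N + 1) → L :=
      fun j => Function.update (fun m => A.tw k r (x m)) j (D (x j)) with hz
    set dz : Fin (N + 1) → Fin (N + 1) → Γ := fun j => Function.update dx j (dx j + d) with hdz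
    have hzg : ∀ j m, z j m ∈ A.grading (dz j m) := by
      intro j m
      rcases eq_or_ne m j with h | h
      · subst h
        simpa [hz, hdz] using hDdeg _ _ (hx m)
      · simpa [hz, hdz, Function.update_of_ne h] using A.tw_grade k r _ _ (hx m)
    have expand : (D ∘ₗ φ - A.ε d f • (φ ∘ₗ D)) (A.bracket x)
        = ∑ j : Fin (N + 1),
            ((A.ε f (∑ m ∈ Finset.Iio i, dx m) * A.ε d (∑ m ∈ Finset.Iio j, dy m)) •
                A.bracket (Function.update (fun m => A.tw k r (y m)) j (D (y j)))
              - (A.ε d f * (A.ε d (∑ m ∈ Finset.Iio j, dx m) *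
                  A.ε f (∑ m ∈ Finset.Iio i, dz j m))) •
                A.bracket (Function.update (fun m => A.tw l s (z j m)) i (φ (z j i)))) := by
      have h1 : φ (A.bracket x) = A.ε f (∑ m ∈ Finset.Iio i, dx m) • A.bracket y :=
        hφbr i dx x hx
      have h2 := hDbr dy y hyg
      have h3 := hDbr dx x hx
      have h4 : ∀ j, φ (A.bracket (z j)) =
          A.ε f (∑ m ∈ Finset.Iio i, dz j m) •
            A.bracket (Function.update (fun m => A.tw l s (z j m)) i (φ (z j i))) :=
        fun j => hφbr i (dz j) (z j) (hzg j)
      simp only [LinearMap.sub_apply, LinearMap.comp_apply, LinearMap.smul_apply]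
      rw [h1, map_smul, h2, h3, map_sum, Finset.smul_sum, Finset.smul_sum,
        ← Finset.sum_sub_distrib]
      refine Finset.sum_congr rfl fun j _ => ?_
      rw [map_smul, h4 j, smul_smul, smul_smul, smul_smul, mul_assoc]
    have hterm0 : ∀ j : Fin (N + 1), j ≠ i →
        (A.ε f (∑ m ∈ Finset.Iio i, dx m) * A.ε d (∑ m ∈ Finset.Iio j, dy m)) •
            A.bracket (Function.update (fun m => A.tw k r (y m)) j (D (y j)))
          - (A.ε d f * (A.ε d (∑ m ∈ Finset.Iio j, dx m) *
              A.ε f (∑ m ∈ Finset.Iio i, dz j m))) •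
            A.bracket (Function.update (fun m => A.tw l s (z j m)) i (φ (z j i))) = 0 := by
      intro j hj
      have harg : Function.update (fun m => A.tw k r (y m)) j (D (y j))
          = Function.update (fun m => A.tw l s (z j m)) i (φ (z j i)) := by
        funext m
        rcases eq_or_ne m j with h | h
        · subst h
          simp only [hy, hz, Function.update_self, Function.update_of_ne hj]
          exact A.commutesTw_tw hDtw l s (x m)
        · rcases eq_or_ne m i with h' | h'
          · subst h'
            simp only [hy, hz, Function.update_self, Function.update_of_ne h,
              Function.update_of_ne (Ne.symm hj)]
            exact (A.commutesTw_tw hφtw k r (x m)).symm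
          · simp only [hy, hz, Function.update_of_ne h, Function.update_of_ne h']
            rw [A.tw_tw, A.tw_tw, Nat.add_comm l k, Nat.add_comm s r]
      have hcoef : A.ε f (∑ m ∈ Finset.Iio i, dx m) * A.ε d (∑ m ∈ Finset.Iio j, dy m)
          = A.ε d f * (A.ε d (∑ m ∈ Finset.Iio j, dx m) *
              A.ε f (∑ m ∈ Finset.Iio i, dz j m)) := by
        rw [hdy, hdz, sum_update_add dx i f (Finset.Iio j), sum_update_add dx j d (Finset.Iio i)]
        rcases lt_or_gt_of_ne hj with h | h
        · -- j < i
          rw [if_neg (by simpa [Finset.mem_Iio] using h.asymm), if_pos (Finset.mem_Iio.2 h),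
            add_zero, A.eps_add_right]
          have hsk := A.eps_skew d f
          linear_combination (-(A.ε d (∑ m ∈ Finset.Iio j, dx m) *
            A.ε f (∑ m ∈ Finset.Iio i, dx m))) * hsk
        · -- i < j
          rw [if_pos (Finset.mem_Iio.2 h), if_neg (by simpa [Finset.mem_Iio] using h.asymm),
            add_zero, A.eps_add_right]
          ring
      rw [harg, hcoef, sub_self]
    rw [expand, Finset.sum_eq_single_of_mem i (Finset.mem_univ i) (fun j _ hj => hterm0 j hj)]
    have hsum1 : ∑ m ∈ Finset.Iio i, dy m = ∑ m ∈ Finset.Iio i, dx m := by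
      rw [hdy, Finset.sum_update_of_notMem (by simp [Finset.mem_Iio])]
    have hsum2 : ∑ m ∈ Finset.Iio i, dz i m = ∑ m ∈ Finset.Iio i, dx m := by
      rw [hdz, Finset.sum_update_of_notMem (by simp [Finset.mem_Iio])]
    have harg1 : Function.update (fun m => A.tw k r (y m)) i (D (y i))
        = Function.update (fun m => A.tw (k + l) (r + s) (x m)) i (D (φ (x i))) := by
      funext m
      rcases eq_or_ne m i with h | h
      · subst h
        simp only [hy, Function.update_self]
      · simp only [hy, Function.update_of_ne h]
        exact A.tw_tw k r l s (x m)
    have harg2 : Function.update (fun m => A.tw l s (z i m)) i (φ (z i i))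
        = Function.update (fun m => A.tw (k + l) (r + s) (x m)) i (φ (D (x i))) := by
      funext m
      rcases eq_or_ne m i with h | h
      · subst h
        simp only [hz, Function.update_self]
      · simp only [hz, Function.update_of_ne h]
        rw [A.tw_tw, Nat.add_comm l k, Nat.add_comm s r]
    have hrhs : A.bracket (Function.update (fun m => A.tw (k + l) (r + s) (x m)) i
          ((D ∘ₗ φ - A.ε d f • (φ ∘ₗ D)) (x i)))
        = A.bracket (Function.update (fun m => A.tw (k + l) (r + s) (x m)) i (D (φ (x i))))
          - A.ε d f • A.bracket
              (Function.update (fun m => A.tw (k + l) (r + s) (x m)) i (φ (D (x i)))) := by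
      simp only [LinearMap.sub_apply, LinearMap.comp_apply, LinearMap.smul_apply]
      rw [MultilinearMap.map_update_sub, MultilinearMap.map_update_smul]
    have hc1 : A.ε f (∑ m ∈ Finset.Iio i, dx m) * A.ε d (∑ m ∈ Finset.Iio i, dx m)
        = A.ε (d + f) (∑ m ∈ Finset.Iio i, dx m) := by
      rw [A.eps_add_left]; ring
    have hc2 : A.ε d f * (A.ε d (∑ m ∈ Finset.Iio i, dx m) *
          A.ε f (∑ m ∈ Finset.Iio i, dx m))
        = A.ε (d + f) (∑ m ∈ Finset.Iio i, dx m) * A.ε d f := by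
      rw [A.eps_add_left]; ring
    rw [harg1, harg2, hsum1, hsum2, hrhs, smul_sub, smul_smul, hc1, hc2]
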